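/- arXiv:1410.6779 — 5 statements merged into one kernel-verified Lean document; each statement's English description precedes it below -/
import Mathlib

section
/- Let N ≥ 1 be an integer, Ω ⊂ ℝ^N a bounded open set, l ≥ 1 an integer, and 0 < ε < 1, 0 < r < 1. Then there exist ε̄ > 0 and r̄ > 0 (depending only on Ω, l, ε, r) with the following property: for every nonnegative integrable function f on Ω with ∫_Ω f dx = 1 such that ∫_{Ω ∩ ⋃_{i=1}^{l} B_r(p_i)} f dx < 1 − ε for every choice of l points p_1, …, p_l in the closure of Ω, there exist l+1 points p̄_1, …, p̄_{l+1} in the closure of Ω such that ∫_{Ω ∩ B_{r̄}(p̄_i)} f dx ≥ ε̄ for every i = 1, …, l+1 and the balls B_{2r̄}(p̄_i), i = 1, …, l+1, are pairwise disjoint. -/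
open MeasureTheory Real Metric Set
open scoped ENNReal


lemma aux_sum_bound {α ι : Type*} [DecidableEq ι] [MeasurableSpace α] (μ : Measure α) (f : α → ℝ)
    (hf : ∀ x, 0 ≤ f x) :
    ∀ (T : Finset ι) (u : ι → Set α), (∀ i, MeasurableSet (u i)) →
    ∀ (S : Set α), MeasurableSet S → IntegrableOn f S μ → S ⊆ ⋃ i ∈ T, u i →
    (∫ x in S, f x ∂μ) ≤ ∑ i ∈ T, ∫ x in S ∩ u i, f x ∂μ := by
  intro T
  induction T using Finset.induction with
  | empty =>
    intro u hu S hS hi hsub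
    simp only [Finset.notMem_empty, iUnion_of_empty, iUnion_empty, subset_empty_iff] at hsub
    simp [hsub]
  | insert a T' ha ih =>
    intro u hu S hS hi hsub
    have hdec : S = (S ∩ u a) ∪ (S \ u a) := by
      rw [inter_union_diff]
    have hd : Disjoint (S ∩ u a) (S \ u a) := disjoint_sdiff_right.mono_left inter_subset_right
    have h1 : IntegrableOn f (S ∩ u a) μ := hi.mono_set inter_subset_left
    have h2 : IntegrableOn f (S \ u a) μ := hi.mono_set diff_subset
    have hsplit : (∫ x in S, f x ∂μ) = (∫ x in S ∩ u a, f x ∂μ) + ∫ x in S \ u a, f x ∂μ := by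
      conv_lhs => rw [hdec]
      exact setIntegral_union hd (hS.diff (hu a)) h1 h2
    have hsub2 : S \ u a ⊆ ⋃ i ∈ T', u i := by
      intro x hx
      have := hsub hx.1
      simp only [Finset.mem_insert, iUnion_iUnion_eq_or_left, mem_union] at this ⊢
      rcases this with h | h
      · exact absurd h hx.2
      · exact h
    have := ih u hu (S \ u a) (hS.diff (hu a)) h2 hsub2
    rw [hsplit, Finset.sum_insert ha]
    gcongr
    refine this.trans (Finset.sum_le_sum fun i _ => ?_)
    apply setIntegral_mono_set (hi.mono_set inter_subset_left)
    · exact Filter.Eventually.of_forall fun x => hf x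
    · exact Filter.Eventually.of_forall fun x hx => ⟨hx.1.1, hx.2⟩

/-- Covering-type criterium: if no `l` balls of radius `r` capture mass `1 − ε` of `f`,
then there are `l+1` well-separated balls of radius `r̄` each carrying mass at least `ε̄`. -/
theorem mass_spreading_criterium (N : ℕ) (hN : 1 ≤ N)
    (Ω : Set (EuclideanSpace ℝ (Fin N))) (hΩo : IsOpen Ω) (hΩb : Bornology.IsBounded Ω)
    (l : ℕ) (hl : 1 ≤ l) (ε r : ℝ) (hε : 0 < ε) (hε1 : ε < 1) (hr : 0 < r) (hr1 : r < 1) :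
    ∃ εb : ℝ, 0 < εb ∧ ∃ rb : ℝ, 0 < rb ∧
      ∀ f : EuclideanSpace ℝ (Fin N) → ℝ,
        (∀ x, 0 ≤ f x) → IntegrableOn f Ω volume → (∫ x in Ω, f x) = 1 →
        (∀ p : Fin l → EuclideanSpace ℝ (Fin N), (∀ i, p i ∈ closure Ω) →
          (∫ x in Ω ∩ ⋃ i, Metric.ball (p i) r, f x) < 1 - ε) →
        ∃ q : Fin (l + 1) → EuclideanSpace ℝ (Fin N),
          (∀ i, q i ∈ closure Ω) ∧
          (∀ i, εb ≤ ∫ x in Ω ∩ Metric.ball (q i) rb, f x) ∧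
          (∀ i j, i ≠ j →
            Disjoint (Metric.ball (q i) (2 * rb)) (Metric.ball (q j) (2 * rb))) := by
  classical
  by_cases hne : Ω.Nonempty
  case neg =>
    rw [not_nonempty_iff_eq_empty] at hne
    refine ⟨1, one_pos, 1, one_pos, fun f hf0 hfi hint hsmall => ?_⟩
    rw [hne] at hint
    simp at hint

  set rb : ℝ := r / 5 with hrb
  have hrb0 : 0 < rb := by positivity
  -- compactness and finite cover
  have hK : IsCompact (closure Ω) := hΩb.isCompact_closure
  have hcov : closure Ω ⊆ ⋃ p : closure Ω, Metric.ball (↑p : EuclideanSpace ℝ (Fin N)) rb := by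
    intro x hx
    exact mem_iUnion.2 ⟨⟨x, hx⟩, mem_ball_self hrb0⟩
  obtain ⟨T, hT⟩ := hK.elim_finite_subcover (fun p : closure Ω => Metric.ball (↑p : EuclideanSpace ℝ (Fin N)) rb)
    (fun p => isOpen_ball) hcov
  have hTne : T.Nonempty := by
    obtain ⟨z, hz⟩ := hne
    have := hT (subset_closure hz)
    rw [mem_iUnion₂] at this
    obtain ⟨p, hp, _⟩ := this
    exact ⟨p, hp⟩
  have hM : (0 : ℝ) < T.card := by exact_mod_cast Finset.card_pos.2 hTne
  set εb : ℝ := ε / T.card with hεb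
  have hεb0 : 0 < εb := by positivity
  refine ⟨εb, hεb0, rb, hrb0, fun f hf0 hfi hint hsmall => ?_⟩
  obtain ⟨z, hz⟩ := hne
  have hzc : z ∈ closure Ω := subset_closure hz
  -- main inductive claim
  have key : ∀ k : ℕ, k ≤ l + 1 → ∃ q : Fin k → EuclideanSpace ℝ (Fin N),
      (∀ i, q i ∈ closure Ω) ∧
      (∀ i, εb ≤ ∫ x in Ω ∩ Metric.ball (q i) rb, f x) ∧
      (∀ i j, i ≠ j → Disjoint (Metric.ball (q i) (2 * rb)) (Metric.ball (q j) (2 * rb))) := by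
    intro k
    induction k with
    | zero => exact fun _ => ⟨Fin.elim0, fun i => i.elim0, fun i => i.elim0, fun i => i.elim0⟩
    | succ k ih =>
      intro hk1
      have hk : k ≤ l := Nat.lt_succ_iff.mp hk1
      obtain ⟨q, hqc, hqm, hqd⟩ := ih (le_trans hk (Nat.le_succ l))
      -- apply the hypothesis to the padded tuple
      set p' : Fin l → EuclideanSpace ℝ (Fin N) := fun i => if h : (i : ℕ) < k then q ⟨i, h⟩ else z with hp'
      have hp'c : ∀ i, p' i ∈ closure Ω := by
        intro i
        by_cases h : (i : ℕ) < k
        · simp only [hp', dif_pos h]; exact hqc _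
        · simp only [hp', dif_neg h]; exact hzc
      have hlt := hsmall p' hp'c
      set U : Set (EuclideanSpace ℝ (Fin N)) := ⋃ i : Fin k, Metric.ball (q i) r with hU
      have hUo : IsOpen U := isOpen_iUnion fun i => isOpen_ball
      have hUsub : Ω ∩ U ⊆ Ω ∩ ⋃ i : Fin l, Metric.ball (p' i) r := by
        rintro x ⟨hx1, hx2⟩
        refine ⟨hx1, ?_⟩
        rw [mem_iUnion] at hx2 ⊢
        obtain ⟨i, hi⟩ := hx2
        refine ⟨⟨i, lt_of_lt_of_le i.2 hk⟩, ?_⟩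
        have : p' ⟨i, lt_of_lt_of_le i.2 hk⟩ = q i := by
          simp only [hp', dif_pos i.2]
        rwa [this]
      have hint1 : IntegrableOn f (Ω ∩ ⋃ i : Fin l, Metric.ball (p' i) r) volume :=
        hfi.mono_set inter_subset_left
      have hmono : (∫ x in Ω ∩ U, f x) ≤ ∫ x in Ω ∩ ⋃ i : Fin l, Metric.ball (p' i) r, f x :=
        setIntegral_mono_set hint1 (Filter.Eventually.of_forall hf0)
          (Filter.Eventually.of_forall hUsub)
      have hUlt : (∫ x in Ω ∩ U, f x) < 1 - ε := lt_of_le_of_lt hmono hlt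
      -- the complement carries mass > ε
      set S : Set (EuclideanSpace ℝ (Fin N)) := Ω \ U with hS
      have hSm : MeasurableSet S := hΩo.measurableSet.diff hUo.measurableSet
      have hSint : IntegrableOn f S volume := hfi.mono_set diff_subset
      have hsplit : (∫ x in Ω, f x) = (∫ x in Ω ∩ U, f x) + ∫ x in S, f x := by
        rw [← setIntegral_union (disjoint_sdiff_right.mono_left inter_subset_right)
          (hΩo.measurableSet.diff hUo.measurableSet) (hfi.mono_set inter_subset_left) hSint,
          inter_union_diff]
      have hSmass : ε < ∫ x in S, f x := by
        have := hint
        rw [hsplit] at this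
        linarith
      -- pigeonhole over the covering balls
      have hScov : S ⊆ ⋃ p ∈ T, Metric.ball (↑p : EuclideanSpace ℝ (Fin N)) rb :=
        fun x hx => hT (subset_closure hx.1)
      have hsum := aux_sum_bound volume f hf0 T (fun p => Metric.ball (↑p : EuclideanSpace ℝ (Fin N)) rb)
        (fun p => measurableSet_ball) S hSm hSint hScov
      have hexists : ∃ p ∈ T, εb ≤ ∫ x in S ∩ Metric.ball (↑p : EuclideanSpace ℝ (Fin N)) rb, f x := by
        by_contra hcon
        push_neg at hcon
        have : ∑ p ∈ T, (∫ x in S ∩ Metric.ball (↑p : EuclideanSpace ℝ (Fin N)) rb, f x)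
            < ∑ p ∈ T, εb := Finset.sum_lt_sum_of_nonempty hTne fun p hp => hcon p hp
        rw [Finset.sum_const, nsmul_eq_mul, hεb, mul_div_cancel₀ _ (ne_of_gt hM)] at this
        linarith
      obtain ⟨p, hpT, hpm⟩ := hexists
      set c : EuclideanSpace ℝ (Fin N) := ↑p with hc
      have hcc : c ∈ closure Ω := p.2
      -- mass of the new ball
      have hcm : εb ≤ ∫ x in Ω ∩ Metric.ball c rb, f x := by
        refine le_trans hpm (setIntegral_mono_set (hfi.mono_set inter_subset_left)
          (Filter.Eventually.of_forall hf0) (Filter.Eventually.of_forall ?_))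
        exact fun x hx => ⟨hx.1.1, hx.2⟩
      -- separation from the old points
      have hsep : ∀ i : Fin k, 4 * rb ≤ dist c (q i) := by
        intro i
        have hne2 : (S ∩ Metric.ball c rb).Nonempty := by
          by_contra hco
          rw [not_nonempty_iff_eq_empty] at hco
          rw [hco] at hpm
          simp at hpm
          linarith
        obtain ⟨x, hxS, hxb⟩ := hne2
        have hxq : r ≤ dist x (q i) := by
          by_contra hco
          push_neg at hco
          exact hxS.2 (mem_iUnion.2 ⟨i, mem_ball.2 hco⟩)
        have h1 : dist c (q i) ≥ dist x (q i) - dist x c := by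
          have := dist_triangle x c (q i)
          rw [dist_comm c (q i)] at *
          linarith [dist_triangle x c (q i)]
        have h2 : dist x c < rb := mem_ball.mp hxb
        have : r - rb ≤ dist c (q i) := by linarith
        rw [hrb] at *
        linarith
      -- assemble the new tuple
      refine ⟨Fin.snoc q c, ?_, ?_, ?_⟩
      · intro i
        refine Fin.lastCases ?_ (fun j => ?_) i
        · rw [Fin.snoc_last]; exact hcc
        · rw [Fin.snoc_castSucc]; exact hqc j
      · intro i
        refine Fin.lastCases ?_ (fun j => ?_) i
        · rw [Fin.snoc_last]; exact hcm
        · rw [Fin.snoc_castSucc]; exact hqm j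
      · have hdist : ∀ i : Fin k, Disjoint (Metric.ball c (2 * rb)) (Metric.ball (q i) (2 * rb)) :=
          fun i => ball_disjoint_ball (by linarith [hsep i])
        intro i j hij
        induction i using Fin.lastCases with
        | last =>
          induction j using Fin.lastCases with
          | last => exact absurd rfl hij
          | cast j' => rw [Fin.snoc_last, Fin.snoc_castSucc]; exact hdist j'
        | cast i' =>
          induction j using Fin.lastCases with
          | last => rw [Fin.snoc_last, Fin.snoc_castSucc]; exact (hdist i').symm
          | cast j' =>
            rw [Fin.snoc_castSucc, Fin.snoc_castSucc]
            exact hqd i' j' fun h => hij (congrArg Fin.castSucc h)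
  exact key (l + 1) le_rfl
end

section
/- Let N ≥ 2 be an integer, m ≥ 1 an integer, p_1, …, p_m ∈ ℝ^N, t_1, …, t_m ≥ 0 with Σ t_i = 1 and at least one t_i > 0, v_1, …, v_m > 0, and ε > 0. Define φ̃(x) = log Σ_{i=1}^{m} t_i v_i^{-1} (ε^{N/(N−1)} + |x−p_i|^{N/(N−1)})^{−N}. Then φ̃ is differentiable at every x ∉ {p_1,…,p_m} and its gradient satisfies |∇φ̃(x)| ≤ (N²/(N−1)) / max( ε , min_{1≤i≤m} |x−p_i| ); in particular |∇φ̃(x)| ≤ (N²/(N−1))/ε and |∇φ̃(x)| ≤ (N²/(N−1))/min_i |x−p_i|. -/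
open MeasureTheory Real Metric Set
open scoped ENNReal

/-- The logarithmic sum of bubbles `φ̃`. -/
noncomputable def phiTilde (N m : ℕ) (p : Fin m → EuclideanSpace ℝ (Fin N))
    (t v : Fin m → ℝ) (ε : ℝ) (x : EuclideanSpace ℝ (Fin N)) : ℝ :=
  Real.log (∑ i, t i * (v i)⁻¹ *
    ((ε ^ ((N : ℝ) / ((N : ℝ) - 1)) + ‖x - p i‖ ^ ((N : ℝ) / ((N : ℝ) - 1))) ^ N)⁻¹)

lemma phiTilde_term_deriv {E : Type*} [NormedAddCommGroup E] [InnerProductSpace ℝ E]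
    (n : ℕ) (hn : 1 ≤ n) (q : ℝ) (hq : 1 ≤ q) (ε : ℝ) (hε : 0 < ε)
    (p x : E) (hx : x ≠ p) :
    ∃ D : E →L[ℝ] ℝ,
      HasFDerivAt (fun y => ((ε ^ q + ‖y - p‖ ^ q) ^ n)⁻¹) D x ∧
      ‖D‖ ≤ (n : ℝ) * q * ‖x - p‖ ^ (q - 1) *
          ((ε ^ q + ‖x - p‖ ^ q) ^ (n + 1))⁻¹ := by
  set r : ℝ := ‖x - p‖ with hr_def
  have hr : 0 < r := by
    simpa [hr_def] using norm_pos_iff.mpr (sub_ne_zero.mpr hx)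
  set u : ℝ := ε ^ q + r ^ q with hu_def
  have hu : 0 < u := add_pos (Real.rpow_pos_of_pos hε q) (Real.rpow_pos_of_pos hr q)
  -- the norm function
  have hnd : DifferentiableAt ℝ (fun y : E => ‖y - p‖) x :=
    DifferentiableAt.norm ℝ ((differentiable_id.sub_const p) x) (sub_ne_zero.mpr hx)
  set L : E →L[ℝ] ℝ := fderiv ℝ (fun y : E => ‖y - p‖) x with hL_def
  have hL : HasFDerivAt (fun y : E => ‖y - p‖) L x := hnd.hasFDerivAt
  have hlip : LipschitzWith 1 (fun y : E => ‖y - p‖) := by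
    refine LipschitzWith.of_dist_le_mul fun a b => ?_
    have := abs_norm_sub_norm_le (a - p) (b - p)
    simpa [Real.dist_eq, dist_eq_norm, sub_sub_sub_cancel_right] using this
  have hLnorm : ‖L‖ ≤ 1 := by
    simpa using norm_fderiv_le_of_lipschitz ℝ hlip
  -- the one-dimensional function
  have h1 : HasDerivAt (fun s : ℝ => s ^ q) (q * r ^ (q - 1)) r :=
    Real.hasDerivAt_rpow_const (Or.inl hr.ne')
  have h2 : HasDerivAt (fun s : ℝ => ε ^ q + s ^ q) (q * r ^ (q - 1)) r := h1.const_add _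
  have h3 : HasDerivAt (fun s : ℝ => (ε ^ q + s ^ q) ^ n)
      ((n : ℝ) * u ^ (n - 1) * (q * r ^ (q - 1))) r := h2.pow n
  have h4 : HasDerivAt (fun s : ℝ => ((ε ^ q + s ^ q) ^ n)⁻¹)
      (-((n : ℝ) * u ^ (n - 1) * (q * r ^ (q - 1))) / (u ^ n) ^ 2) r :=
    h3.inv (pow_ne_zero _ hu.ne')
  have hD : HasFDerivAt (fun y : E => ((ε ^ q + ‖y - p‖ ^ q) ^ n)⁻¹)
      ((-((n : ℝ) * u ^ (n - 1) * (q * r ^ (q - 1))) / (u ^ n) ^ 2) • L) x :=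
    by have := h4.comp_hasFDerivAt x hL; exact this
  refine ⟨_, hD, ?_⟩
  have habs : ‖(-((n : ℝ) * u ^ (n - 1) * (q * r ^ (q - 1))) / (u ^ n) ^ 2)‖
      = ((n : ℝ) * u ^ (n - 1) * (q * r ^ (q - 1))) / (u ^ n) ^ 2 := by
    rw [Real.norm_eq_abs, abs_div, abs_neg]
    rw [abs_of_nonneg, abs_of_nonneg]
    · positivity
    · positivity
  have hpow : (u ^ n) ^ 2 = u ^ (n - 1) * u ^ (n + 1) := by
    rw [← pow_add, ← pow_mul]
    congr 1
    omega
  have heq : ((n : ℝ) * u ^ (n - 1) * (q * r ^ (q - 1))) / (u ^ n) ^ 2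
      = (n : ℝ) * q * r ^ (q - 1) * (u ^ (n + 1))⁻¹ := by
    rw [hpow]
    have h1 : (u : ℝ) ^ (n - 1) ≠ 0 := pow_ne_zero _ hu.ne'
    have h2 : (u : ℝ) ^ (n + 1) ≠ 0 := pow_ne_zero _ hu.ne'
    field_simp
  have hb : ‖(-((n : ℝ) * u ^ (n - 1) * (q * r ^ (q - 1))) / (u ^ n) ^ 2) • L‖
      ≤ ((n : ℝ) * u ^ (n - 1) * (q * r ^ (q - 1))) / (u ^ n) ^ 2 * 1 := by
    refine le_trans (ContinuousLinearMap.opNorm_smul_le _ _) ?_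
    rw [habs]
    exact mul_le_mul_of_nonneg_left hLnorm (by positivity)
  rw [mul_one, heq] at hb
  exact hb

/-- Pointwise gradient bounds for the logarithmic sum of bubbles away
from the singular points. -/
theorem phiTilde_gradient_bound (N m : ℕ) (hN : 2 ≤ N) (hm : 1 ≤ m)
    (p : Fin m → EuclideanSpace ℝ (Fin N)) (t : Fin m → ℝ)
    (ht0 : ∀ i, 0 ≤ t i) (ht1 : (∑ i, t i) = 1) (htpos : ∃ i, 0 < t i)
    (v : Fin m → ℝ) (hv : ∀ i, 0 < v i) (ε : ℝ) (hε : 0 < ε) :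
    ∀ x : EuclideanSpace ℝ (Fin N), (∀ i, x ≠ p i) →
      DifferentiableAt ℝ (phiTilde N m p t v ε) x ∧
      ‖gradient (phiTilde N m p t v ε) x‖ ≤
        ((N : ℝ) ^ 2 / ((N : ℝ) - 1)) / max ε (⨅ i, ‖x - p i‖) ∧
      ‖gradient (phiTilde N m p t v ε) x‖ ≤ ((N : ℝ) ^ 2 / ((N : ℝ) - 1)) / ε ∧
      ‖gradient (phiTilde N m p t v ε) x‖ ≤
        ((N : ℝ) ^ 2 / ((N : ℝ) - 1)) / (⨅ i, ‖x - p i‖) := by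
  intro x hx
  haveI : Nonempty (Fin m) := ⟨⟨0, hm⟩⟩
  set q : ℝ := (N : ℝ) / ((N : ℝ) - 1) with hq_def
  have hN2 : (2 : ℝ) ≤ (N : ℝ) := by exact_mod_cast hN
  have hN1 : (0 : ℝ) < (N : ℝ) - 1 := by linarith
  have hq1 : 1 ≤ q := by
    rw [hq_def, le_div_iff₀ hN1]
    linarith
  have hq0 : 0 < q := lt_of_lt_of_le one_pos hq1
  -- per-term derivatives
  have H : ∀ i : Fin m, ∃ D : EuclideanSpace ℝ (Fin N) →L[ℝ] ℝ,
      HasFDerivAt (fun y => ((ε ^ q + ‖y - p i‖ ^ q) ^ N)⁻¹) D x ∧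
      ‖D‖ ≤ (N : ℝ) * q * ‖x - p i‖ ^ (q - 1) *
          ((ε ^ q + ‖x - p i‖ ^ q) ^ (N + 1))⁻¹ :=
    fun i => phiTilde_term_deriv N (by omega) q hq1 ε hε (p i) x (hx i)
  choose D hD hDle using H
  -- the inner sum
  set S : EuclideanSpace ℝ (Fin N) → ℝ :=
    fun y => ∑ i, t i * (v i)⁻¹ * ((ε ^ q + ‖y - p i‖ ^ q) ^ N)⁻¹ with hS_def
  have hu : ∀ i : Fin m, 0 < ε ^ q + ‖x - p i‖ ^ q := fun i =>
    add_pos_of_pos_of_nonneg (Real.rpow_pos_of_pos hε q)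
      (Real.rpow_nonneg (norm_nonneg _) q)
  have hSder : HasFDerivAt S (∑ i, (t i * (v i)⁻¹) • D i) x :=
    HasFDerivAt.fun_sum fun i _ => (hD i).const_mul _
  have hterm_nonneg : ∀ i : Fin m,
      0 ≤ t i * (v i)⁻¹ * ((ε ^ q + ‖x - p i‖ ^ q) ^ N)⁻¹ := fun i =>
    mul_nonneg (mul_nonneg (ht0 i) (inv_nonneg.mpr (hv i).le))
      (inv_nonneg.mpr (pow_nonneg (hu i).le N))
  have hSpos : 0 < S x := by
    obtain ⟨i₀, hi₀⟩ := htpos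
    refine Finset.sum_pos' (fun i _ => hterm_nonneg i) ⟨i₀, Finset.mem_univ _, ?_⟩
    exact mul_pos (mul_pos hi₀ (inv_pos.mpr (hv i₀)))
      (inv_pos.mpr (pow_pos (hu i₀) N))
  have hφ : HasFDerivAt (phiTilde N m p t v ε)
      ((S x)⁻¹ • ∑ i, (t i * (v i)⁻¹) • D i) x := hSder.log hSpos.ne'
  have hdiff : DifferentiableAt ℝ (phiTilde N m p t v ε) x := hφ.differentiableAt
  -- the minimizing index
  obtain ⟨i₀, hi₀⟩ := Finite.exists_min (fun i : Fin m => ‖x - p i‖)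
  have hinf : (⨅ i, ‖x - p i‖) = ‖x - p i₀‖ :=
    le_antisymm (ciInf_le (Finite.bddBelow_range _) i₀) (le_ciInf hi₀)
  have hrmin : 0 < ‖x - p i₀‖ := norm_pos_iff.mpr (sub_ne_zero.mpr (hx i₀))
  set M : ℝ := max ε (⨅ i, ‖x - p i‖) with hM_def
  have hM : 0 < M := lt_of_lt_of_le hε (le_max_left _ _)
  -- key pointwise inequality
  have hkey : ∀ i : Fin m, M * ‖x - p i‖ ^ (q - 1) ≤ ε ^ q + ‖x - p i‖ ^ q := by
    intro i
    set r : ℝ := ‖x - p i‖ with hr_def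
    have hr : 0 < r := norm_pos_iff.mpr (sub_ne_zero.mpr (hx i))
    have hMle : M ≤ max ε r := by
      rw [hM_def, hinf]
      exact max_le_max le_rfl (hi₀ i)
    have hq1' : 0 ≤ q - 1 := by linarith
    rcases le_total r ε with h | h
    · have : max ε r = ε := max_eq_left h
      have h2 : r ^ (q - 1) ≤ ε ^ (q - 1) := Real.rpow_le_rpow hr.le h hq1'
      have h3 : ε * ε ^ (q - 1) = ε ^ q := by
        have := Real.rpow_add hε 1 (q - 1)
        rw [show (1 : ℝ) + (q - 1) = q by ring, Real.rpow_one] at this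
        exact this.symm
      calc M * r ^ (q - 1) ≤ ε * r ^ (q - 1) := by
            apply mul_le_mul_of_nonneg_right _ (Real.rpow_nonneg hr.le _)
            rw [← this]; exact hMle
        _ ≤ ε * ε ^ (q - 1) := by
            exact mul_le_mul_of_nonneg_left h2 hε.le
        _ = ε ^ q := h3
        _ ≤ ε ^ q + r ^ q := le_add_of_nonneg_right (Real.rpow_nonneg hr.le q)
    · have hmax : max ε r = r := max_eq_right h
      have h3 : r * r ^ (q - 1) = r ^ q := by
        have := Real.rpow_add hr 1 (q - 1)
        rw [show (1 : ℝ) + (q - 1) = q by ring, Real.rpow_one] at this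
        exact this.symm
      calc M * r ^ (q - 1) ≤ r * r ^ (q - 1) := by
            apply mul_le_mul_of_nonneg_right _ (Real.rpow_nonneg hr.le _)
            rw [← hmax]; exact hMle
        _ = r ^ q := h3
        _ ≤ ε ^ q + r ^ q := le_add_of_nonneg_left (Real.rpow_pos_of_pos hε q).le
  -- bound on each term derivative norm
  have hDle' : ∀ i : Fin m, ‖D i‖ ≤
      ((N : ℝ) * q / M) * ((ε ^ q + ‖x - p i‖ ^ q) ^ N)⁻¹ := by
    intro i
    refine (hDle i).trans ?_
    set r : ℝ := ‖x - p i‖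
    set u : ℝ := ε ^ q + r ^ q with hu_def
    have hupos : 0 < u := hu i
    have hr0 : 0 ≤ r := norm_nonneg _
    have hpow : u ^ (N + 1) = u ^ N * u := pow_succ u N
    have hNq0 : (0:ℝ) ≤ (N : ℝ) * q := mul_nonneg (Nat.cast_nonneg N) hq0.le
    have hstep : r ^ (q - 1) * (u ^ (N + 1))⁻¹ ≤ (u ^ N)⁻¹ / M := by
      rw [← div_eq_mul_inv, div_le_div_iff₀ (by positivity) hM]
      have huN : (u ^ N)⁻¹ * u ^ (N + 1) = u := by
        rw [hpow]; field_simp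
      rw [huN]
      have := hkey i
      linarith
    calc (N : ℝ) * q * r ^ (q - 1) * (u ^ (N + 1))⁻¹
        = ((N : ℝ) * q) * (r ^ (q - 1) * (u ^ (N + 1))⁻¹) := by ring
      _ ≤ ((N : ℝ) * q) * ((u ^ N)⁻¹ / M) := mul_le_mul_of_nonneg_left hstep hNq0
      _ = ((N : ℝ) * q / M) * (u ^ N)⁻¹ := by ring
  -- total bound on the derivative
  have hNq0 : (0:ℝ) ≤ (N : ℝ) * q := mul_nonneg (Nat.cast_nonneg N) hq0.le
  have hsum : ∑ i, (t i * (v i)⁻¹) * ‖D i‖ ≤ ((N : ℝ) * q / M) * S x := by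
    rw [hS_def, Finset.mul_sum]
    refine Finset.sum_le_sum fun i _ => ?_
    have hci : 0 ≤ t i * (v i)⁻¹ := mul_nonneg (ht0 i) (inv_nonneg.mpr (hv i).le)
    calc t i * (v i)⁻¹ * ‖D i‖
        ≤ t i * (v i)⁻¹ * (((N : ℝ) * q / M) * ((ε ^ q + ‖x - p i‖ ^ q) ^ N)⁻¹) :=
          mul_le_mul_of_nonneg_left (hDle' i) hci
      _ = ((N : ℝ) * q / M) * (t i * (v i)⁻¹ * ((ε ^ q + ‖x - p i‖ ^ q) ^ N)⁻¹) := by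
          ring
  have hfderiv : fderiv ℝ (phiTilde N m p t v ε) x
      = (S x)⁻¹ • ∑ i, (t i * (v i)⁻¹) • D i := hφ.fderiv
  have hgradnorm : ‖gradient (phiTilde N m p t v ε) x‖
      = ‖fderiv ℝ (phiTilde N m p t v ε) x‖ := by
    rw [gradient]
    exact LinearIsometryEquiv.norm_map _ _
  have hmain : ‖gradient (phiTilde N m p t v ε) x‖ ≤ (N : ℝ) * q / M := by
    rw [hgradnorm, hfderiv, norm_smul]
    have h1 : ‖(S x)⁻¹‖ = (S x)⁻¹ := by
      rw [Real.norm_eq_abs, abs_of_nonneg (inv_nonneg.mpr hSpos.le)]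
    rw [h1]
    have h2 : ‖∑ i, (t i * (v i)⁻¹) • D i‖ ≤ ((N : ℝ) * q / M) * S x := by
      refine (norm_sum_le _ _).trans ?_
      refine le_trans (Finset.sum_le_sum fun i _ => ?_) hsum
      refine le_trans (ContinuousLinearMap.opNorm_smul_le _ _) (le_of_eq ?_)
      rw [Real.norm_eq_abs,
        abs_of_nonneg (mul_nonneg (ht0 i) (inv_nonneg.mpr (hv i).le))]
    calc (S x)⁻¹ * ‖∑ i, (t i * (v i)⁻¹) • D i‖
        ≤ (S x)⁻¹ * (((N : ℝ) * q / M) * S x) :=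
          mul_le_mul_of_nonneg_left h2 (inv_nonneg.mpr hSpos.le)
      _ = (N : ℝ) * q / M := by field_simp
  have hC : (N : ℝ) * q = (N : ℝ) ^ 2 / ((N : ℝ) - 1) := by rw [hq_def]; ring
  have hC0 : (0:ℝ) ≤ (N : ℝ) ^ 2 / ((N : ℝ) - 1) := div_nonneg (by positivity) hN1.le
  rw [hC] at hmain
  have hεM : ε ≤ M := le_max_left _ _
  have hinfM : (⨅ i, ‖x - p i‖) ≤ M := le_max_right _ _
  have hinfpos : 0 < (⨅ i, ‖x - p i‖) := hinf ▸ hrmin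
  exact ⟨hdiff, hmain,
    hmain.trans (div_le_div_of_nonneg_left hC0 hε hεM),
    hmain.trans (div_le_div_of_nonneg_left hC0 hinfpos hinfM)⟩
end

section
/- Let N ≥ 2 be an integer, Ω ⊂ ℝ^N a nonempty bounded open set, C_0 ≥ 1, and let V : ℝ^N → ℝ be Lipschitz with constant C_0 and satisfy 1/C_0 ≤ V(x) ≤ C_0 on the closure of Ω. Let λ > c_N. Then the functional J_λ(u) = (1/N)∫_Ω |∇u|^N dx − λ log(∫_Ω V e^u dx) is unbounded from below on compactly supported C¹ functions: for every M > 0 there exists a C¹ function u : ℝ^N → ℝ with compact support contained in Ω such that (1/N) ∫_Ω |∇u|^N dx − λ log( ∫_Ω V e^u dx ) ≤ −M. -/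
open MeasureTheory Real Metric Set
open scoped ENNReal

noncomputable def omegaN (N : ℕ) : ℝ :=
  (volume (Metric.ball (0 : EuclideanSpace ℝ (Fin N)) 1)).toReal

noncomputable def cN (N : ℕ) : ℝ :=
  N * ((N : ℝ) ^ 2 / ((N : ℝ) - 1)) ^ (N - 1) * omegaN N

section MFAux

noncomputable def chiAux (T t : ℝ) : ℝ := max 0 (min 1 (min t (T - t)))

lemma chiAux_cont (T : ℝ) : Continuous (chiAux T) := by
  unfold chiAux; fun_prop

lemma chiAux_nonneg (T t : ℝ) : 0 ≤ chiAux T t := le_max_left _ _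

lemma chiAux_le_one (T t : ℝ) : chiAux T t ≤ 1 :=
  max_le zero_le_one (min_le_left _ _)

lemma chiAux_eq_zero_of_nonpos (T : ℝ) {t : ℝ} (ht : t ≤ 0) : chiAux T t = 0 :=
  max_eq_left (le_trans (min_le_right _ _) (le_trans (min_le_left _ _) ht))

lemma chiAux_eq_zero_of_ge (T : ℝ) {t : ℝ} (ht : T ≤ t) : chiAux T t = 0 :=
  max_eq_left (le_trans (min_le_right _ _) (le_trans (min_le_right _ _) (by linarith)))

lemma chiAux_eq_one (T : ℝ) {t : ℝ} (h1 : 1 ≤ t) (h2 : t ≤ T - 1) : chiAux T t = 1 := by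
  have : min t (T - t) ≥ 1 := le_min h1 (by linarith)
  unfold chiAux
  rw [min_eq_left this, max_eq_right zero_le_one]

noncomputable def gAux (gam T s : ℝ) : ℝ := gam * ∫ t in (0:ℝ)..s, chiAux T t

lemma gAux_hasDerivAt (gam T s : ℝ) : HasDerivAt (gAux gam T) (gam * chiAux T s) s := by
  have h := intervalIntegral.integral_hasDerivAt_right
    ((chiAux_cont T).intervalIntegrable 0 s)
    ((chiAux_cont T).stronglyMeasurableAtFilter _ _)
    (chiAux_cont T).continuousAt
  exact h.const_mul gam

lemma gAux_contDiff (gam T : ℝ) : ContDiff ℝ 1 (gAux gam T) := by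
  rw [contDiff_one_iff_deriv]
  constructor
  · exact fun s => (gAux_hasDerivAt gam T s).differentiableAt
  · have : deriv (gAux gam T) = fun s => gam * chiAux T s :=
      funext fun s => (gAux_hasDerivAt gam T s).deriv
    rw [this]
    exact continuous_const.mul (chiAux_cont T)

lemma gAux_of_nonpos (gam T : ℝ) {s : ℝ} (hs : s ≤ 0) : gAux gam T s = 0 := by
  unfold gAux
  have : ∫ t in (0:ℝ)..s, chiAux T t = 0 := by
    rw [intervalIntegral.integral_symm]
    rw [intervalIntegral.integral_congr (g := fun _ => (0:ℝ))]
    · simp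
    · intro t ht
      rw [Set.uIcc_of_le hs] at ht
      exact chiAux_eq_zero_of_nonpos T ht.2
  rw [this, mul_zero]

lemma gAux_of_ge (gam T : ℝ) {s : ℝ} (hs : T ≤ s) : gAux gam T s = gAux gam T T := by
  unfold gAux
  congr 1
  have hadd : ∫ t in (0:ℝ)..s, chiAux T t
      = (∫ t in (0:ℝ)..T, chiAux T t) + ∫ t in T..s, chiAux T t := by
    rw [intervalIntegral.integral_add_adjacent_intervals
      ((chiAux_cont T).intervalIntegrable 0 T) ((chiAux_cont T).intervalIntegrable T s)]
  have hz : ∫ t in T..s, chiAux T t = 0 := by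
    rw [intervalIntegral.integral_congr (g := fun _ => (0:ℝ))]
    · simp
    · intro t ht
      rw [Set.uIcc_of_le hs] at ht
      exact chiAux_eq_zero_of_ge T ht.1
  rw [hadd, hz, add_zero]

lemma gAux_T_lower (gam T : ℝ) (hgam : 0 ≤ gam) (hT : 2 ≤ T) :
    gam * (T - 2) ≤ gAux gam T T := by
  unfold gAux
  have h01 : (0:ℝ) ≤ 1 := zero_le_one
  have h1T : (1:ℝ) ≤ T - 1 := by linarith
  have e1 : (∫ t in (0:ℝ)..1, chiAux T t) + (∫ t in (1:ℝ)..(T-1), chiAux T t)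
      = ∫ t in (0:ℝ)..(T-1), chiAux T t :=
    intervalIntegral.integral_add_adjacent_intervals
      ((chiAux_cont T).intervalIntegrable _ _) ((chiAux_cont T).intervalIntegrable _ _)
  have e2 : (∫ t in (0:ℝ)..(T-1), chiAux T t) + (∫ t in (T-1)..T, chiAux T t)
      = ∫ t in (0:ℝ)..T, chiAux T t :=
    intervalIntegral.integral_add_adjacent_intervals
      ((chiAux_cont T).intervalIntegrable _ _) ((chiAux_cont T).intervalIntegrable _ _)
  have hsplit : ∫ t in (0:ℝ)..T, chiAux T t
      = (∫ t in (0:ℝ)..1, chiAux T t) + (∫ t in (1:ℝ)..(T-1), chiAux T t)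
        + ∫ t in (T-1)..T, chiAux T t := by linarith
  have hmid : ∫ t in (1:ℝ)..(T-1), chiAux T t = T - 2 := by
    rw [intervalIntegral.integral_congr (g := fun _ => (1:ℝ))]
    · simp
      ring
    · intro t ht
      rw [Set.uIcc_of_le h1T] at ht
      exact chiAux_eq_one T ht.1 ht.2
  have h1 : 0 ≤ ∫ t in (0:ℝ)..1, chiAux T t :=
    intervalIntegral.integral_nonneg h01 (fun t _ => chiAux_nonneg T t)
  have h2 : 0 ≤ ∫ t in (T-1)..T, chiAux T t :=
    intervalIntegral.integral_nonneg (by linarith) (fun t _ => chiAux_nonneg T t)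
  calc gam * (T - 2) ≤ gam * ((∫ t in (0:ℝ)..1, chiAux T t) + (T - 2)
        + ∫ t in (T-1)..T, chiAux T t) := by nlinarith
    _ = gam * ∫ t in (0:ℝ)..T, chiAux T t := by rw [hsplit, hmid]

open MeasureTheory Real Metric Set
open scoped ENNReal

lemma omegaN_pos (N : ℕ) : 0 < omegaN N := by
  unfold omegaN
  rw [ENNReal.toReal_pos_iff]
  exact ⟨measure_ball_pos _ _ one_pos, measure_ball_lt_top⟩

lemma radial_lemma (N : ℕ) (hN : 2 ≤ N) (x₀ : EuclideanSpace ℝ (Fin N)) (gam a R : ℝ)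
    (hgam : 0 ≤ gam) (ha : 0 < a) (haR : a ≤ R) :
    Integrable (fun x => Set.indicator (Icc a R) (fun r => (gam * r⁻¹)^N) ‖x - x₀‖) ∧
    (∫ x, Set.indicator (Icc a R) (fun r => (gam * r⁻¹)^N) ‖x - x₀‖)
      = N * omegaN N * (gam^N * (Real.log R - Real.log a)) := by
  haveI : Nontrivial (EuclideanSpace ℝ (Fin N)) :=
    Module.nontrivial_of_finrank_pos (R := ℝ)
      (by rw [finrank_euclideanSpace_fin]; omega)
  set f : ℝ → ℝ := Set.indicator (Icc a R) (fun r => (gam * r⁻¹)^N) with hf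
  have hfmeas : Measurable f :=
    ((measurable_const.mul measurable_inv).pow_const N).indicator measurableSet_Icc
  have hfnonneg : ∀ r, 0 ≤ f r := by
    intro r
    apply Set.indicator_nonneg
    intro y hy
    have hy0 : 0 < y := lt_of_lt_of_le ha hy.1
    positivity
  have hC : ∀ r, f r ≤ (gam * a⁻¹)^N := by
    intro r
    rw [hf]
    by_cases h : r ∈ Icc a R
    · rw [Set.indicator_of_mem h]
      have hr0 : 0 < r := lt_of_lt_of_le ha h.1
      apply pow_le_pow_left₀ (by positivity)
      exact mul_le_mul_of_nonneg_left (inv_anti₀ ha h.1) hgam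
    · rw [Set.indicator_of_notMem h]
      positivity
  have hsupp : ∀ r, r ∉ Icc a R → f r = 0 := fun r h => Set.indicator_of_notMem h _
  -- integrability
  have hint : Integrable (fun x => f ‖x - x₀‖) := by
    apply Integrable.mono'
      (g := Set.indicator (Metric.closedBall x₀ R) (fun _ => (gam * a⁻¹)^N))
    · rw [integrable_indicator_iff measurableSet_closedBall]
      exact integrableOn_const measure_closedBall_lt_top.ne
    · exact (hfmeas.comp ((measurable_id.sub measurable_const).norm)).aestronglyMeasurable
    · refine Filter.Eventually.of_forall fun x => ?_
      rw [Real.norm_of_nonneg (hfnonneg _)]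
      by_cases h : ‖x - x₀‖ ∈ Icc a R
      · have hx : x ∈ Metric.closedBall x₀ R := by
          rw [Metric.mem_closedBall, dist_eq_norm]; exact h.2
        rw [Set.indicator_of_mem hx]
        exact hC _
      · rw [hsupp _ h]
        apply Set.indicator_nonneg
        intro y _
        positivity
  refine ⟨hint, ?_⟩
  have htrans : (∫ x, f ‖x - x₀‖) = ∫ x : EuclideanSpace ℝ (Fin N), f ‖x‖ :=
    integral_sub_right_eq_self (fun x => f ‖x‖) x₀
  rw [htrans, MeasureTheory.integral_fun_norm_addHaar volume f]
  rw [finrank_euclideanSpace_fin]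
  have hinner : (fun y => y ^ (N - 1) • f y)
      = Set.indicator (Icc a R) (fun y => gam^N * y⁻¹) := by
    funext y
    by_cases h : y ∈ Icc a R
    · have hy : y ≠ 0 := ne_of_gt (lt_of_lt_of_le ha h.1)
      rw [hf, smul_eq_mul, Set.indicator_of_mem h, Set.indicator_of_mem h]
      have hpow : y ^ (N - 1) * y = y ^ N := by
        rw [← pow_succ]; congr 1; omega
      have hyN : y ^ (N - 1) ≠ 0 := pow_ne_zero _ hy
      rw [mul_pow, inv_pow, ← hpow, mul_inv]
      field_simp
    · rw [hf, smul_eq_mul, Set.indicator_of_notMem h, Set.indicator_of_notMem h, mul_zero]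
  rw [hinner]
  rw [MeasureTheory.setIntegral_indicator measurableSet_Icc]
  have hss : Ioi (0:ℝ) ∩ Icc a R = Icc a R :=
    Set.inter_eq_self_of_subset_right (fun y hy => lt_of_lt_of_le ha hy.1)
  rw [hss]
  rw [MeasureTheory.integral_Icc_eq_integral_Ioc,
    ← intervalIntegral.integral_of_le haR]
  have : ∫ y in a..R, gam ^ N * y⁻¹ = gam ^ N * ∫ y in a..R, y⁻¹ :=
    intervalIntegral.integral_const_mul _ _
  rw [this, integral_inv (by
    rw [Set.uIcc_of_le haR]
    intro hmem
    exact absurd hmem.1 (not_le.mpr ha)),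
    Real.log_div (ne_of_gt (lt_of_lt_of_le ha haR)) (ne_of_gt ha)]
  rw [nsmul_eq_mul, smul_eq_mul]
  unfold omegaN
  rw [measureReal_def]
  ring

end MFAux

set_option maxHeartbeats 1000000 in
/-- For `λ > c_N` the mean field functional `J_λ` is unbounded from below. -/
theorem mean_field_functional_unbounded_below (N : ℕ) (hN : 2 ≤ N)
    (Ω : Set (EuclideanSpace ℝ (Fin N))) (hΩo : IsOpen Ω) (hΩb : Bornology.IsBounded Ω)
    (hΩne : Ω.Nonempty)
    (C₀ : ℝ) (hC₀ : 1 ≤ C₀) (V : EuclideanSpace ℝ (Fin N) → ℝ)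
    (hVlip : LipschitzWith (Real.toNNReal C₀) V)
    (hV : ∀ x ∈ closure Ω, 1 / C₀ ≤ V x ∧ V x ≤ C₀)
    (lam : ℝ) (hlam : cN N < lam) :
    ∀ M : ℝ, 0 < M →
      ∃ u : EuclideanSpace ℝ (Fin N) → ℝ,
        ContDiff ℝ 1 u ∧ HasCompactSupport u ∧ tsupport u ⊆ Ω ∧
        (1 / (N : ℝ)) * (∫ x in Ω, ‖gradient u x‖ ^ N) -
            lam * Real.log (∫ x in Ω, V x * Real.exp (u x)) ≤ -M := by
  intro M hM
  classical
  -- basic numerology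
  have hN1 : (1:ℝ) < (N:ℝ) := by exact_mod_cast Nat.lt_of_lt_of_le one_lt_two hN
  have hNpos : (0:ℝ) < (N:ℝ) := by linarith
  have hN1pos : (0:ℝ) < (N:ℝ) - 1 := by linarith
  set γ : ℝ := (N:ℝ)^2 / ((N:ℝ) - 1) with hγdef
  have hγpos : 0 < γ := by positivity
  have hγN : γ - (N:ℝ) = (N:ℝ) / ((N:ℝ) - 1) := by
    field_simp [hγdef]
    rw [hγdef]; linear_combination (div_mul_cancel₀ ((N:ℝ)^2) hN1pos.ne')
  have hγgtN : (N:ℝ) < γ := by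
    have : (0:ℝ) < (N:ℝ) / ((N:ℝ) - 1) := by positivity
    linarith
  have hω := omegaN_pos N
  have hcN : 0 < cN N := by
    unfold cN
    have : (0:ℝ) < ((N:ℝ)^2 / ((N:ℝ) - 1)) ^ (N - 1) := by positivity
    positivity
  have hlam0 : 0 < lam := lt_trans hcN hlam
  have hkey : γ ^ N * omegaN N = cN N * (γ - (N:ℝ)) := by
    have hpow : γ ^ N = γ ^ (N - 1) * γ := by
      rw [← pow_succ]; congr 1; omega
    rw [hpow, hγN]
    unfold cN
    rw [hγdef]
    field_simp
  set δ : ℝ := (γ - (N:ℝ)) * (lam - cN N) with hδdef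
  have hδpos : 0 < δ := mul_pos (by linarith) (by linarith)
  -- choose center and radius
  obtain ⟨x₀, hx₀⟩ := hΩne
  obtain ⟨ε, hε, hball⟩ := Metric.isOpen_iff.1 hΩo x₀ hx₀
  set R : ℝ := ε / 2 with hRdef
  have hR : 0 < R := by positivity
  have hRΩ : Metric.closedBall x₀ R ⊆ Ω :=
    (Metric.closedBall_subset_ball (by simp [hRdef]; linarith)).trans hball
  -- choose T
  set C₁ : ℝ := lam * Real.log C₀ + 2 * lam * γ - lam * (N:ℝ) * Real.log R
      - lam * Real.log (omegaN N) with hC₁def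
  set T : ℝ := max 2 ((M + C₁) / δ) with hTdef
  have hT2 : 2 ≤ T := le_max_left _ _
  have hT0 : 0 < T := by linarith
  have hTδ : M + C₁ ≤ δ * T := by
    have := le_max_right 2 ((M + C₁) / δ)
    calc M + C₁ = δ * ((M + C₁) / δ) := by field_simp
      _ ≤ δ * T := by
          apply mul_le_mul_of_nonneg_left _ hδpos.le
          rw [hTdef]; exact le_max_right _ _
  -- radii
  set a : ℝ := R * Real.exp (-T) with hadef
  set ρ : ℝ := R * Real.exp (-(T+1)) with hρdef
  have ha : 0 < a := by positivity
  have hρ : 0 < ρ := by positivity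
  have hρa : ρ < a := by
    apply mul_lt_mul_of_pos_left _ hR
    exact Real.exp_lt_exp.2 (by linarith)
  have haR : a < R := by
    calc a = R * Real.exp (-T) := rfl
      _ < R * 1 := by
          apply mul_lt_mul_of_pos_left _ hR
          exact Real.exp_lt_one_iff.2 (by linarith)
      _ = R := mul_one R
  have hloga : Real.log a = Real.log R - T := by
    rw [hadef, Real.log_mul (ne_of_gt hR) (Real.exp_ne_zero _), Real.log_exp]
    ring
  -- the function
  set A : ℝ := gAux γ T T with hAdef
  set h : EuclideanSpace ℝ (Fin N) → ℝ := fun y => Real.log R - Real.log ‖y - x₀‖ with hhdef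
  set u : EuclideanSpace ℝ (Fin N) → ℝ := fun y => if ‖y - x₀‖ < ρ then A else gAux γ T (h y) with hudef
  have hA_lb : γ * (T - 2) ≤ A := gAux_T_lower γ T hγpos.le hT2
  -- u = A on ball of radius a
  have huA : ∀ y : EuclideanSpace ℝ (Fin N), ‖y - x₀‖ < a → u y = A := by
    intro y hy
    simp only [hudef]
    by_cases hc : ‖y - x₀‖ < ρ
    · rw [if_pos hc]
    · rw [if_neg hc]
      push_neg at hc
      have hypos : 0 < ‖y - x₀‖ := lt_of_lt_of_le hρ hc
      have : Real.log ‖y - x₀‖ < Real.log R - T := by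
        have := Real.log_lt_log hypos hy
        rwa [hloga] at this
      have hhy : T ≤ h y := by rw [hhdef]; simp only; linarith
      rw [gAux_of_ge γ T hhy, hAdef]
  -- u is given by the formula outside radius ρ
  have huF : ∀ y : EuclideanSpace ℝ (Fin N), ρ < ‖y - x₀‖ → u y = gAux γ T (h y) := by
    intro y hy
    simp only [hudef]
    rw [if_neg (not_lt.2 hy.le)]
  -- u vanishes outside closedBall x₀ R
  have huz : ∀ y : EuclideanSpace ℝ (Fin N), y ∉ Metric.closedBall x₀ R → u y = 0 := by
    intro y hy
    rw [Metric.mem_closedBall, dist_eq_norm, not_le] at hy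
    rw [huF y (lt_trans (lt_trans hρa haR) hy)]
    apply gAux_of_nonpos
    rw [hhdef]
    simp only
    have := Real.log_le_log hR hy.le
    linarith
  -- open sets
  have hopen_a : IsOpen {y : EuclideanSpace ℝ (Fin N) | ‖y - x₀‖ < a} := by
    have : {y : EuclideanSpace ℝ (Fin N) | ‖y - x₀‖ < a} = Metric.ball x₀ a := by
      ext y; simp [Metric.mem_ball, dist_eq_norm]
    rw [this]; exact Metric.isOpen_ball
  have hopen_ρ : IsOpen {y : EuclideanSpace ℝ (Fin N) | ρ < ‖y - x₀‖} :=
    isOpen_lt continuous_const (continuous_id.sub continuous_const).norm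
  -- C¹ smoothness
  have hCD : ContDiff ℝ 1 u := by
    rw [contDiff_iff_contDiffAt]
    intro x
    by_cases hx : ‖x - x₀‖ < a
    · have heq : u =ᶠ[nhds x] fun _ => A :=
        Filter.eventuallyEq_of_mem (hopen_a.mem_nhds hx) (fun y hy => huA y hy)
      exact contDiffAt_const.congr_of_eventuallyEq heq
    · push_neg at hx
      have hxρ : ρ < ‖x - x₀‖ := lt_of_lt_of_le hρa hx
      have hxpos : 0 < ‖x - x₀‖ := lt_trans hρ hxρ
      have heq : u =ᶠ[nhds x] fun y => gAux γ T (h y) :=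
        Filter.eventuallyEq_of_mem (hopen_ρ.mem_nhds hxρ) (fun y hy => huF y hy)
      have hnx : x - x₀ ≠ 0 := by
        intro hc; rw [hc] at hxpos; simp at hxpos
      have h1 : ContDiffAt ℝ 1 (fun y : EuclideanSpace ℝ (Fin N) => ‖y - x₀‖) x :=
        ContDiffAt.norm ℝ (contDiffAt_id.sub contDiffAt_const) hnx
      have h2 : ContDiffAt ℝ 1 (fun y : EuclideanSpace ℝ (Fin N) => Real.log ‖y - x₀‖) x :=
        h1.log (ne_of_gt hxpos)
      have h3 : ContDiffAt ℝ 1 h x := contDiffAt_const.sub h2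
      exact ((gAux_contDiff γ T).contDiffAt.comp x h3).congr_of_eventuallyEq heq
  -- compact support
  have hsupp : Function.support u ⊆ Metric.closedBall x₀ R := by
    intro y hy
    by_contra hc
    exact hy (huz y hc)
  have htsupp : tsupport u ⊆ Metric.closedBall x₀ R :=
    closure_minimal hsupp Metric.isClosed_closedBall
  have hHCS : HasCompactSupport u :=
    HasCompactSupport.of_support_subset_isCompact (isCompact_closedBall x₀ R) hsupp
  -- gradient norm = fderiv norm
  have hgradnorm : ∀ (f : EuclideanSpace ℝ (Fin N) → ℝ) (x : EuclideanSpace ℝ (Fin N)), ‖gradient f x‖ = ‖fderiv ℝ f x‖ := by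
    intro f x
    have : gradient f x = (InnerProductSpace.toDual ℝ (EuclideanSpace ℝ (Fin N))).symm (fderiv ℝ f x) := rfl
    rw [this]
    exact LinearIsometryEquiv.norm_map _ _
  -- pointwise gradient bound
  set b : EuclideanSpace ℝ (Fin N) → ℝ := fun x => Set.indicator (Set.Icc a R) (fun r => (γ * r⁻¹)^N) ‖x - x₀‖
      with hbdef
  have hbnonneg : ∀ x, 0 ≤ b x := by
    intro x
    apply Set.indicator_nonneg
    intro r hr
    have : 0 < r := lt_of_lt_of_le ha hr.1
    positivity
  have hgradb : ∀ x : EuclideanSpace ℝ (Fin N), ‖gradient u x‖ ^ N ≤ b x := by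
    intro x
    by_cases hx : ‖x - x₀‖ < a
    · have heq : u =ᶠ[nhds x] fun _ => A :=
        Filter.eventuallyEq_of_mem (hopen_a.mem_nhds hx) (fun y hy => huA y hy)
      have : fderiv ℝ u x = 0 := by
        rw [heq.fderiv_eq, fderiv_fun_const]
        rfl
      rw [hgradnorm, this]
      simp only [norm_zero]
      rw [zero_pow (by omega)]
      exact hbnonneg x
    · push_neg at hx
      have hxρ : ρ < ‖x - x₀‖ := lt_of_lt_of_le hρa hx
      have hxpos : 0 < ‖x - x₀‖ := lt_trans hρ hxρ
      have hnx : x - x₀ ≠ 0 := by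
        intro hc; rw [hc] at hxpos; simp at hxpos
      have heq : u =ᶠ[nhds x] fun y => gAux γ T (h y) :=
        Filter.eventuallyEq_of_mem (hopen_ρ.mem_nhds hxρ) (fun y hy => huF y hy)
      -- derivative of the norm
      have hd1 : DifferentiableAt ℝ (fun y : EuclideanSpace ℝ (Fin N) => ‖y - x₀‖) x :=
        (ContDiffAt.norm ℝ (contDiffAt_id.sub contDiffAt_const) hnx).differentiableAt one_ne_zero
      set n' := fderiv ℝ (fun y : EuclideanSpace ℝ (Fin N) => ‖y - x₀‖) x with hn'def
      have hlipn : LipschitzWith 1 (fun y : EuclideanSpace ℝ (Fin N) => ‖y - x₀‖) := by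
        apply LipschitzWith.of_dist_le_mul
        intro p q
        rw [Real.dist_eq, dist_eq_norm, NNReal.coe_one, one_mul]
        have := abs_norm_sub_norm_le (p - x₀) (q - x₀)
        rwa [sub_sub_sub_cancel_right] at this
      have hn'le : ‖n'‖ ≤ 1 := by
        have := norm_fderiv_le_of_lipschitz ℝ hlipn (x₀ := x)
        simpa using this
      have hlog : HasFDerivAt (fun y : EuclideanSpace ℝ (Fin N) => Real.log ‖y - x₀‖)
          ((‖x - x₀‖⁻¹) • n') x :=
        hd1.hasFDerivAt.log (ne_of_gt hxpos)
      have hh' : HasFDerivAt h (0 - (‖x - x₀‖⁻¹) • n') x :=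
        (hasFDerivAt_const (Real.log R) x).sub hlog
      have hgd : HasDerivAt (gAux γ T) (γ * chiAux T (h x)) (h x) := gAux_hasDerivAt γ T _
      have hcomp : HasFDerivAt (fun y => gAux γ T (h y))
          ((γ * chiAux T (h x)) • (0 - (‖x - x₀‖⁻¹) • n')) x :=
        hgd.comp_hasFDerivAt x hh'
      have hfd : fderiv ℝ u x = (γ * chiAux T (h x)) • (0 - (‖x - x₀‖⁻¹) • n') := by
        rw [heq.fderiv_eq, hcomp.fderiv]
      have hnormle : ‖gradient u x‖ ≤ γ * chiAux T (h x) * ‖x - x₀‖⁻¹ := by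
        rw [hgradnorm, hfd, norm_smul, zero_sub, norm_neg, norm_smul]
        rw [Real.norm_eq_abs, Real.norm_eq_abs,
          abs_of_nonneg (mul_nonneg hγpos.le (chiAux_nonneg T _)),
          abs_of_nonneg (inv_nonneg.2 hxpos.le)]
        calc γ * chiAux T (h x) * (‖x - x₀‖⁻¹ * ‖n'‖)
            ≤ γ * chiAux T (h x) * (‖x - x₀‖⁻¹ * 1) := by
              apply mul_le_mul_of_nonneg_left
              · exact mul_le_mul_of_nonneg_left hn'le (inv_nonneg.2 hxpos.le)
              · exact mul_nonneg hγpos.le (chiAux_nonneg T _)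
          _ = γ * chiAux T (h x) * ‖x - x₀‖⁻¹ := by ring
      by_cases hxR : ‖x - x₀‖ ≤ R
      · have hmem : ‖x - x₀‖ ∈ Set.Icc a R := ⟨hx, hxR⟩
        rw [hbdef]
        simp only
        rw [Set.indicator_of_mem hmem]
        apply pow_le_pow_left₀ (norm_nonneg _)
        calc ‖gradient u x‖ ≤ γ * chiAux T (h x) * ‖x - x₀‖⁻¹ := hnormle
          _ ≤ γ * 1 * ‖x - x₀‖⁻¹ := by
              apply mul_le_mul_of_nonneg_right _ (inv_nonneg.2 hxpos.le)
              exact mul_le_mul_of_nonneg_left (chiAux_le_one T _) hγpos.le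
          _ = γ * ‖x - x₀‖⁻¹ := by ring
      · push_neg at hxR
        have hhx : h x ≤ 0 := by
          rw [hhdef]
          simp only
          have := Real.log_le_log hR hxR.le
          linarith
        have hchi : chiAux T (h x) = 0 := chiAux_eq_zero_of_nonpos T hhx
        have : ‖gradient u x‖ = 0 := by
          have h0 : ‖gradient u x‖ ≤ 0 := by
            rw [hchi] at hnormle
            simpa using hnormle
          exact le_antisymm h0 (norm_nonneg _)
        rw [this, zero_pow (by omega)]
        exact hbnonneg x
  -- energy bound
  obtain ⟨hbint, hbval⟩ := radial_lemma N hN x₀ γ a R hγpos.le ha haR.le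
  have henergy : (∫ x in Ω, ‖gradient u x‖ ^ N) ≤ (N:ℝ) * omegaN N * (γ^N * T) := by
    have h1 : (∫ x in Ω, ‖gradient u x‖ ^ N) ≤ ∫ x in Ω, b x := by
      apply integral_mono_of_nonneg
      · exact Filter.Eventually.of_forall (fun x => by positivity)
      · exact hbint.integrableOn
      · exact Filter.Eventually.of_forall hgradb
    have h2 : (∫ x in Ω, b x) ≤ ∫ x, b x :=
      setIntegral_le_integral hbint (Filter.Eventually.of_forall hbnonneg)
    have h3 : (∫ x, b x) = (N:ℝ) * omegaN N * (γ^N * T) := by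
      rw [hbdef]
      simp only
      rw [hbval, hloga]
      ring
    linarith
  -- mass lower bound
  have hclosΩ : IsCompact (closure Ω) := hΩb.isCompact_closure
  have hC₀pos : (0:ℝ) < C₀ := lt_of_lt_of_le one_pos hC₀
  have hcontVu : Continuous (fun x => V x * Real.exp (u x)) :=
    hVlip.continuous.mul (Real.continuous_exp.comp hCD.continuous)
  have hIntVu : IntegrableOn (fun x => V x * Real.exp (u x)) Ω :=
    (hcontVu.continuousOn.integrableOn_compact hclosΩ).mono_set subset_closure
  have hVunonneg : ∀ x ∈ Ω, 0 ≤ V x * Real.exp (u x) := by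
    intro x hx
    have := (hV x (subset_closure hx)).1
    have h1 : 0 < V x := lt_of_lt_of_le (by positivity) this
    positivity
  have hball_a : Metric.ball x₀ a ⊆ Ω := by
    intro y hy
    apply hRΩ
    rw [Metric.mem_ball] at hy
    exact Metric.mem_closedBall.2 (le_of_lt (lt_trans hy haR))
  set LB : ℝ := (1/C₀) * Real.exp A * (a^N * omegaN N) with hLBdef
  have hLBpos : 0 < LB := by positivity
  have hmass : LB ≤ ∫ x in Ω, V x * Real.exp (u x) := by
    have hs1 : (∫ x in Metric.ball x₀ a, V x * Real.exp (u x))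
        ≤ ∫ x in Ω, V x * Real.exp (u x) := by
      apply setIntegral_mono_set hIntVu
      · filter_upwards [ae_restrict_mem hΩo.measurableSet] with x hx
        simpa using hVunonneg x hx
      · exact HasSubset.Subset.eventuallyLE hball_a
    have hs2 : (volume (Metric.ball x₀ a)).toReal * ((1/C₀) * Real.exp A)
        ≤ ∫ x in Metric.ball x₀ a, V x * Real.exp (u x) := by
      have hconst : (∫ _x in Metric.ball x₀ a, ((1/C₀) * Real.exp A))
          = (volume (Metric.ball x₀ a)).toReal * ((1/C₀) * Real.exp A) := by
        rw [setIntegral_const, smul_eq_mul, measureReal_def]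
      rw [← hconst]
      apply setIntegral_mono_on
      · exact integrableOn_const measure_ball_lt_top.ne
      · exact hIntVu.mono_set hball_a
      · exact measurableSet_ball
      · intro x hx
        rw [Metric.mem_ball, dist_eq_norm] at hx
        rw [huA x hx]
        have hVx := (hV x (subset_closure (hball_a (by rw [Metric.mem_ball, dist_eq_norm]; exact hx)))).1
        exact mul_le_mul_of_nonneg_right hVx (Real.exp_pos A).le
    have hvol : (volume (Metric.ball x₀ a)).toReal = a^N * omegaN N := by
      haveI : Nontrivial (EuclideanSpace ℝ (Fin N)) :=
        Module.nontrivial_of_finrank_pos (R := ℝ)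
          (by rw [finrank_euclideanSpace_fin]; omega)
      rw [Measure.addHaar_ball_of_pos volume x₀ ha, ENNReal.toReal_mul,
        ENNReal.toReal_ofReal (by positivity), finrank_euclideanSpace_fin]
      rfl
    rw [hLBdef]
    calc (1/C₀) * Real.exp A * (a^N * omegaN N)
        = (volume (Metric.ball x₀ a)).toReal * ((1/C₀) * Real.exp A) := by rw [hvol]; ring
      _ ≤ ∫ x in Metric.ball x₀ a, V x * Real.exp (u x) := hs2
      _ ≤ ∫ x in Ω, V x * Real.exp (u x) := hs1
  have hlogLB : Real.log LB = -Real.log C₀ + A + (N:ℝ) * (Real.log R - T)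
      + Real.log (omegaN N) := by
    rw [hLBdef, Real.log_mul (by positivity) (by positivity),
      Real.log_mul (by positivity) (by positivity),
      Real.log_mul (by positivity) (by positivity),
      Real.log_exp, Real.log_pow, one_div, Real.log_inv, hloga]
    ring
  have hlogmass : -Real.log C₀ + A + (N:ℝ) * (Real.log R - T) + Real.log (omegaN N)
      ≤ Real.log (∫ x in Ω, V x * Real.exp (u x)) := by
    rw [← hlogLB]
    exact Real.log_le_log hLBpos hmass
  -- final assembly
  refine ⟨u, hCD, hHCS, htsupp.trans hRΩ, ?_⟩
  have hE : omegaN N * γ ^ N = lam * (γ - (N:ℝ)) - δ := by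
    rw [hδdef]
    linear_combination hkey
  set LLB : ℝ := -Real.log C₀ + A + (N:ℝ) * (Real.log R - T) + Real.log (omegaN N)
      with hLLBdef
  set LLB' : ℝ := -Real.log C₀ + γ * (T - 2) + (N:ℝ) * (Real.log R - T)
      + Real.log (omegaN N) with hLLB'def
  have hLLB : LLB' ≤ LLB := by rw [hLLBdef, hLLB'def]; linarith
  have step1 : (1 / (N : ℝ)) * (∫ x in Ω, ‖gradient u x‖ ^ N)
      ≤ omegaN N * γ^N * T := by
    calc (1 / (N : ℝ)) * (∫ x in Ω, ‖gradient u x‖ ^ N)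
        ≤ (1 / (N : ℝ)) * ((N:ℝ) * omegaN N * (γ^N * T)) := by
          apply mul_le_mul_of_nonneg_left henergy (by positivity)
      _ = omegaN N * γ^N * T := by field_simp
  have step2 : -(lam * Real.log (∫ x in Ω, V x * Real.exp (u x))) ≤ -(lam * LLB') := by
    have h1 : lam * LLB' ≤ lam * LLB := mul_le_mul_of_nonneg_left hLLB hlam0.le
    have h2 : lam * LLB ≤ lam * Real.log (∫ x in Ω, V x * Real.exp (u x)) :=
      mul_le_mul_of_nonneg_left hlogmass hlam0.le
    linarith
  have hring : omegaN N * γ^N * T - lam * LLB' = -(δ * T) + C₁ := by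
    rw [hLLB'def, hC₁def]
    have : omegaN N * γ ^ N * T = (lam * (γ - (N:ℝ)) - δ) * T := by rw [hE]
    rw [this]
    ring
  have : (1 / (N : ℝ)) * (∫ x in Ω, ‖gradient u x‖ ^ N) -
      lam * Real.log (∫ x in Ω, V x * Real.exp (u x))
      ≤ -(δ * T) + C₁ := by
    rw [← hring]
    have := add_le_add step1 step2
    linarith
  linarith
end

section
/- Let N ≥ 2 be an integer and let U : ℝ^N → ℝ be defined by U(x) = log( F_N / (1 + |x|^{N/(N−1)})^N ), where F_N = N (N²/(N−1))^{N−1}. Then for every x ∈ ℝ^N with x ≠ 0, the vector field x ↦ |∇U(x)|^{N−2} ∇U(x) is differentiable at x and its divergence satisfies Σ_{i=1}^{N} ∂_i ( |∇U|^{N−2} ∂_i U )(x) = − e^{U(x)}; that is, U solves −Δ_N U = e^U pointwise in ℝ^N ∖ {0}. -/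
open MeasureTheory Real Metric Set
open scoped ENNReal

noncomputable def FN (N : ℕ) : ℝ :=
  N * ((N : ℝ) ^ 2 / ((N : ℝ) - 1)) ^ (N - 1)

/-- The standard radial solution of the Liouville-type equation. -/
noncomputable def stdBubble (N : ℕ) (x : EuclideanSpace ℝ (Fin N)) : ℝ :=
  Real.log (FN N / (1 + ‖x‖ ^ ((N : ℝ) / ((N : ℝ) - 1))) ^ N)

/-- The vector field `|∇U|^{N-2} ∇U` associated to the standard bubble. -/
noncomputable def stdBubbleField (N : ℕ) (x : EuclideanSpace ℝ (Fin N)) :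
    EuclideanSpace ℝ (Fin N) :=
  ‖gradient (stdBubble N) x‖ ^ (N - 2) • gradient (stdBubble N) x

namespace LiouvilleAux

noncomputable def P (n : ℕ) : ℝ := ((n : ℝ) + 2) / ((n : ℝ) + 1)

noncomputable def K (n : ℕ) : ℝ := (((n : ℝ) + 2) ^ 2 / ((n : ℝ) + 1)) ^ (n + 1)

lemma hp1 (n : ℕ) : 1 < P n := by
  rw [P, lt_div_iff₀ (by positivity)]; linarith

lemma cast_eq (n : ℕ) : ((n + 2 : ℕ) : ℝ) / (((n + 2 : ℕ) : ℝ) - 1) = P n := by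
  rw [P]; push_cast; ring_nf

lemma S_pos (n : ℕ) (r : ℝ) (hr : 0 ≤ r) : 0 < 1 + r ^ (P n) := by
  have := Real.rpow_nonneg hr (P n); linarith

lemma FN_eq (n : ℕ) : FN (n + 2) = ((n : ℝ) + 2) * K n := by
  rw [FN, K]
  have h : (n + 2) - 1 = n + 1 := by omega
  rw [h]
  push_cast
  ring

lemma FN_pos (n : ℕ) : 0 < FN (n + 2) := by
  rw [FN_eq]
  have : (0:ℝ) < K n := by rw [K]; positivity
  positivity

lemma log_form (n : ℕ) (y : EuclideanSpace ℝ (Fin (n + 2))) :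
    stdBubble (n + 2) y = Real.log (FN (n + 2)) - ((n : ℝ) + 2) * Real.log (1 + ‖y‖ ^ (P n)) := by
  have hS := S_pos n ‖y‖ (norm_nonneg y)
  rw [stdBubble, cast_eq, Real.log_div (FN_pos n).ne' (by positivity), Real.log_pow]
  push_cast
  ring

end LiouvilleAux

namespace LiouvilleAux

lemma grad_eq (n : ℕ) (x : EuclideanSpace ℝ (Fin (n + 2))) (hx : x ≠ 0) :
    HasGradientAt (stdBubble (n + 2))
      ((-(((n : ℝ) + 2) * P n * ‖x‖ ^ (P n - 2) / (1 + ‖x‖ ^ (P n)))) • x) x := by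
  have hr : 0 < ‖x‖ := norm_pos_iff.mpr hx
  have hS : 0 < 1 + ‖x‖ ^ (P n) := S_pos n ‖x‖ hr.le
  -- derivative of the outer scalar function
  have hφ : HasDerivAt (fun t : ℝ => Real.log (FN (n + 2)) - ((n : ℝ) + 2) * Real.log (1 + t))
      (-(((n : ℝ) + 2) / (1 + ‖x‖ ^ (P n)))) (‖x‖ ^ (P n)) := by
    have h1 : HasDerivAt (fun t : ℝ => (1 : ℝ) + t) 1 (‖x‖ ^ (P n)) :=
      (hasDerivAt_id _).const_add 1
    have h2 := (h1.log hS.ne').const_mul ((n : ℝ) + 2)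
    have h3 := h2.const_sub (Real.log (FN (n + 2)))
    convert h3 using 1
    exacts [rfl, rfl, by rw [mul_one_div]]
  have h1 := hasFDerivAt_norm_rpow x (hp1 n)
  have h2 := hφ.comp_hasFDerivAt x h1
  rw [hasGradientAt_iff_hasFDerivAt]
  have hfun : (fun t : ℝ => Real.log (FN (n + 2)) - ((n : ℝ) + 2) * Real.log (1 + t)) ∘
      (fun y : EuclideanSpace ℝ (Fin (n + 2)) => ‖y‖ ^ (P n)) = stdBubble (n + 2) := by
    funext y
    simp [Function.comp, log_form]
  rw [hfun] at h2
  convert h2 using 1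
  · rfl
  ext v
  simp [InnerProductSpace.toDual_apply_apply, real_inner_smul_left]
  ring

end LiouvilleAux

namespace LiouvilleAux

lemma field_eq (n : ℕ) (y : EuclideanSpace ℝ (Fin (n + 2))) (hy : y ≠ 0) :
    stdBubbleField (n + 2) y = (-(K n / (1 + ‖y‖ ^ (P n)) ^ (n + 1))) • y := by
  have hr : 0 < ‖y‖ := norm_pos_iff.mpr hy
  have hS : 0 < 1 + ‖y‖ ^ (P n) := S_pos n ‖y‖ hr.le
  set q := P n with hq
  set r := ‖y‖ with hrdef
  set S := 1 + r ^ q with hSdef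
  set a : ℝ := -(((n : ℝ) + 2) * q * r ^ (q - 2) / S) with ha
  have hgrad : gradient (stdBubble (n + 2)) y = a • y := (grad_eq n y hy).gradient
  have hA : 0 < ((n : ℝ) + 2) * q * r ^ (q - 2) / S := by
    have : 0 < q := lt_trans one_pos (hp1 n)
    positivity
  have hnorm : ‖a • y‖ = (((n : ℝ) + 2) * q * r ^ (q - 2) / S) * r := by
    rw [norm_smul, Real.norm_eq_abs, ha, abs_neg, abs_of_pos hA]
  rw [stdBubbleField, hgrad, hnorm]
  rw [smul_smul]
  congr 1
  have hrr : r ^ (q - 2) * r = r ^ (q - 1) := by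
    rw [show q - 1 = (q - 2) + 1 by ring, Real.rpow_add hr, Real.rpow_one]
  have hstep1 : ((n : ℝ) + 2) * q * r ^ (q - 2) / S * r = ((n : ℝ) + 2) * q * r ^ (q - 1) / S := by
    rw [div_mul_eq_mul_div, mul_assoc, hrr]
  rw [hstep1]
  have hNsub : (n + 2) - 2 = n := by omega
  rw [hNsub]
  have hpow : (r ^ (q - 1)) ^ (n : ℕ) = r ^ ((q - 1) * (n : ℝ)) := by
    rw [← Real.rpow_natCast (r ^ (q - 1)) n, ← Real.rpow_mul hr.le]
  have hzero : (q - 1) * (n : ℝ) + (q - 2) = 0 := by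
    rw [hq, P]
    field_simp
    ring
  have hone : (r ^ (q - 1)) ^ (n : ℕ) * r ^ (q - 2) = 1 := by
    rw [hpow, ← Real.rpow_add hr, hzero, Real.rpow_zero]
  have hKval : (((n : ℝ) + 2) * q) ^ (n + 1) = K n := by
    rw [K]
    congr 1
    rw [hq, P]
    field_simp
  have hSne : S ≠ 0 := hS.ne'
  rw [div_pow, mul_pow, ha]
  have hmain : (((n : ℝ) + 2) * q) ^ n * (r ^ (q - 1)) ^ n / S ^ n *
      -(((n : ℝ) + 2) * q * r ^ (q - 2) / S) =
      -((((n : ℝ) + 2) * q) ^ (n + 1) * ((r ^ (q - 1)) ^ n * r ^ (q - 2)) / S ^ (n + 1)) := by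
    rw [pow_succ, pow_succ]
    field_simp
  rw [hmain, hone, mul_one, hKval]

end LiouvilleAux


/-- The standard bubble solves `−Δ_N U = e^U` pointwise away from the origin: the vector
field `|∇U|^{N-2}∇U` is differentiable there and its divergence equals `−e^U`. -/
theorem stdBubble_solves_liouville (N : ℕ) (hN : 2 ≤ N) :
    ∀ x : EuclideanSpace ℝ (Fin N), x ≠ 0 →
      DifferentiableAt ℝ (stdBubbleField N) x ∧
      (∑ i : Fin N, fderiv ℝ (stdBubbleField N) x (EuclideanSpace.single i 1) i) =
        -Real.exp (stdBubble N x) := by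
  obtain ⟨n, rfl⟩ : ∃ n, N = n + 2 := ⟨N - 2, by omega⟩
  intro x hx
  open LiouvilleAux in
  have hr : (0:ℝ) < ‖x‖ := norm_pos_iff.mpr hx
  set q : ℝ := LiouvilleAux.P n with hq
  set r : ℝ := ‖x‖ with hrdef
  have hS : 0 < 1 + r ^ q := LiouvilleAux.S_pos n r hr.le
  set S : ℝ := 1 + r ^ q with hSdef
  set KK : ℝ := LiouvilleAux.K n with hK
  have hKpos : 0 < KK := by rw [hK, LiouvilleAux.K]; positivity
  -- derivative of the scalar coefficient
  have hφ : HasDerivAt (fun t : ℝ => -(KK * ((1 + t) ^ (n + 1))⁻¹))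
      (KK * ((n : ℝ) + 1) / S ^ (n + 2)) (r ^ q) := by
    have h1 : HasDerivAt (fun t : ℝ => (1 + t) ^ (n + 1))
        ((((n : ℕ) + 1 : ℕ) : ℝ) * (1 + r ^ q) ^ (n + 1 - 1) * 1) (r ^ q) :=
      ((hasDerivAt_id _).const_add 1).pow (n + 1)
    have h2 := h1.inv (pow_ne_zero _ hS.ne')
    have h3 := (h2.const_mul KK).neg
    convert h3 using 1
    · rfl
    · rfl
    · rfl
    have hSne : S ≠ 0 := hS.ne'
    push_cast
    field_simp
    rw [← pow_mul, show (n + 1) * 2 = n + (n + 2) by ring, pow_add]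
    ring
  have h1 := hasFDerivAt_norm_rpow x (LiouvilleAux.hp1 n)
  have hc : HasFDerivAt (fun y : EuclideanSpace ℝ (Fin (n + 2)) =>
        -(KK * ((1 + ‖y‖ ^ q) ^ (n + 1))⁻¹))
      ((KK * ((n : ℝ) + 1) / S ^ (n + 2)) • ((q * r ^ (q - 2)) • innerSL ℝ x)) x :=
    hφ.comp_hasFDerivAt (f := fun y : EuclideanSpace ℝ (Fin (n + 2)) => ‖y‖ ^ q) x h1
  have hW : HasFDerivAt (fun y : EuclideanSpace ℝ (Fin (n + 2)) =>
        (-(KK * ((1 + ‖y‖ ^ q) ^ (n + 1))⁻¹)) • y)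
      ((-(KK * ((1 + r ^ q) ^ (n + 1))⁻¹)) • ContinuousLinearMap.id ℝ _ +
        ((KK * ((n : ℝ) + 1) / S ^ (n + 2)) • ((q * r ^ (q - 2)) • innerSL ℝ x)).smulRight x) x :=
    hc.smul (hasFDerivAt_id x)
  have hev : stdBubbleField (n + 2) =ᶠ[nhds x]
      (fun y : EuclideanSpace ℝ (Fin (n + 2)) =>
        (-(KK * ((1 + ‖y‖ ^ q) ^ (n + 1))⁻¹)) • y) := by
    filter_upwards [isOpen_compl_singleton.mem_nhds hx] with y hy
    rw [LiouvilleAux.field_eq n y (Set.mem_compl_singleton_iff.mp hy), div_eq_mul_inv]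
  refine ⟨hev.differentiableAt_iff.mpr hW.differentiableAt, ?_⟩
  rw [show fderiv ℝ (stdBubbleField (n + 2)) x = _ from hev.fderiv_eq.trans hW.fderiv]
  simp only [ContinuousLinearMap.add_apply, ContinuousLinearMap.coe_smul', Pi.smul_apply,
    ContinuousLinearMap.id_apply, ContinuousLinearMap.smulRight_apply,
    ContinuousLinearMap.smul_apply, innerSL_apply_apply, EuclideanSpace.inner_single_right,
    conj_trivial, PiLp.add_apply, PiLp.smul_apply, EuclideanSpace.single_apply,
    smul_eq_mul, mul_ite, mul_one, mul_zero]
  simp only [if_true, one_mul]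
  rw [Finset.sum_add_distrib, Finset.sum_const, Finset.card_univ, Fintype.card_fin]
  have hxx : ∑ i : Fin (n + 2), x i * x i = r ^ 2 := by
    have h := real_inner_self_eq_norm_sq x
    rw [PiLp.inner_apply] at h
    simpa [RCLike.inner_apply, sq] using h
  have hsum2 : ∑ i : Fin (n + 2), KK * ((n : ℝ) + 1) / S ^ (n + 2) * (q * r ^ (q - 2) * x i) * x i
      = KK * ((n : ℝ) + 1) / S ^ (n + 2) * (q * r ^ (q - 2)) * (r ^ 2) := by
    rw [← hxx, Finset.mul_sum]
    exact Finset.sum_congr rfl fun i _ => by ring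
  rw [hsum2]
  have hexp : Real.exp (stdBubble (n + 2) x) = FN (n + 2) / S ^ (n + 2) := by
    rw [stdBubble, LiouvilleAux.cast_eq]
    exact Real.exp_log (div_pos (LiouvilleAux.FN_pos n) (by positivity))
  rw [hexp, LiouvilleAux.FN_eq]
  have hr2 : r ^ (q - 2) * r ^ (2 : ℕ) = r ^ q := by
    rw [← Real.rpow_natCast r 2, ← Real.rpow_add hr]
    norm_num
  have hq2 : ((n : ℝ) + 1) * q = (n : ℝ) + 2 := by
    rw [hq, LiouvilleAux.P]
    field_simp
  have hrq : r ^ q = S - 1 := by rw [hSdef]; ring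
  have e2 : KK * ((n : ℝ) + 1) / S ^ (n + 2) * (q * r ^ (q - 2)) * (r ^ 2)
      = KK * ((n : ℝ) + 2) * (S - 1) / S ^ (n + 2) := by
    rw [← hrq, ← hr2, ← hq2]
    ring
  rw [e2, nsmul_eq_mul]
  have hSne : S ≠ 0 := hS.ne'
  rw [pow_succ S (n + 1)]
  push_cast
  field_simp
  ring
end

section
/- Let N ≥ 2 be an integer, ε > 0 and p ∈ ℝ^N. Then ∫_{ℝ^N} F_N ε^{N/(N−1)} / ( ε^{N/(N−1)} + |x−p|^{N/(N−1)} )^N dx = N (N²/(N−1))^{N−1} ω_N = c_N, where F_N = N (N²/(N−1))^{N−1}. In other words, the standard bubble U_{ε,p}(x) = log( F_N ε^{N/(N−1)} / (ε^{N/(N−1)} + |x−p|^{N/(N−1)})^N ) satisfies ∫_{ℝ^N} e^{U_{ε,p}} dx = c_N. -/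
open MeasureTheory Real Metric Set
open scoped ENNReal

open Filter Topology in
private lemma bubble_deriv_aux (k : ℕ) (q B F : ℝ) (hB : 0 < B) (hq : 0 < q)
    (hqk : q * ((k:ℝ)+1) = (k:ℝ)+2) (x : ℝ) (hx : 0 < x) :
    HasDerivAt (fun r : ℝ => F / ((k:ℝ)+2) * (r^(k+2) / (B + r^q)^(k+1)))
      (x^(k+1) * (F * B / (B + x^q)^(k+2))) x := by
  have hxq : 0 < x ^ q := Real.rpow_pos_of_pos hx q
  have hD : 0 < B + x ^ q := by positivity
  have hu : HasDerivAt (fun r : ℝ => r ^ (k+2)) (((k:ℝ)+2) * x ^ (k+1)) x := by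
    simpa using hasDerivAt_pow (k+2) x
  have hin : HasDerivAt (fun r : ℝ => B + r ^ q) (q * x ^ (q-1)) x :=
    (Real.hasDerivAt_rpow_const (Or.inl hx.ne')).const_add B
  have hv : HasDerivAt (fun r : ℝ => (B + r ^ q) ^ (k+1))
      ((((k:ℕ)+1 : ℕ):ℝ) * (B + x ^ q) ^ k * (q * x ^ (q-1))) x := hin.pow (k+1)
  have hdiv := (hu.div hv (by positivity : ((B + x ^ q) ^ (k+1) : ℝ) ≠ 0)).const_mul
      (F / ((k:ℝ)+2))
  refine hdiv.congr_deriv ?_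
  have e1 : x * x ^ (q-1) = x ^ q := by
    nth_rewrite 1 [← Real.rpow_one x]
    rw [← Real.rpow_add hx]; ring_nf
  have e3 : x^(k+2) * x^(q-1) = x^(k+1) * x^q := by rw [pow_succ, mul_assoc, e1]
  have hk2 : ((k:ℝ)+2) ≠ 0 := by positivity
  have e4 : ((k:ℝ)+2) * x^(k+1) * (B+x^q)^(k+1) -
      x^(k+2)*(((k:ℝ)+1) * (B+x^q)^k * (q*x^(q-1))) =
      ((k:ℝ)+2)*x^(k+1)*(B+x^q)^k*B := by
    linear_combination (-(((k:ℝ)+1)*q*(B+x^q)^k)) * e3 + (-(x^(k+1)*x^q*(B+x^q)^k)) * hqk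
  push_cast
  rw [e4]
  field_simp
  ring

open Filter Topology in
private lemma bubble_radial_integral (k : ℕ) (q B F : ℝ) (hB : 0 < B) (hq : 0 < q)
    (hF : 0 ≤ F) (hqk : q * ((k:ℝ)+1) = (k:ℝ)+2) :
    ∫ y in Ioi (0:ℝ), y^(k+1) * (F * B / (B + y^q)^(k+2)) = F / ((k:ℝ)+2) := by
  have hk2 : (0:ℝ) < (k:ℝ)+2 := by positivity
  set g : ℝ → ℝ := fun r => F/((k:ℝ)+2) * (r^(k+2)/(B+r^q)^(k+1)) with hg
  have hc : ContinuousWithinAt g (Ici 0) 0 := by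
    apply ContinuousAt.continuousWithinAt
    apply continuousAt_const.mul
    apply ContinuousAt.div (by fun_prop)
      ((continuousAt_const.add (Real.continuousAt_rpow_const 0 q (Or.inr hq.le))).pow _)
    have : (0:ℝ)^q = 0 := Real.zero_rpow hq.ne'
    show (B + (0:ℝ)^q)^(k+1) ≠ 0
    rw [this]
    positivity
  have hderiv : ∀ x ∈ Ioi (0:ℝ), HasDerivAt g (x^(k+1) * (F * B / (B + x^q)^(k+2))) x :=
    fun x hx => bubble_deriv_aux k q B F hB hq hqk x hx
  have hpos : ∀ x ∈ Ioi (0:ℝ), 0 ≤ x^(k+1) * (F * B / (B + x^q)^(k+2)) := by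
    intro x hx
    have hx' : (0:ℝ) < x := hx
    have : 0 < x ^ q := Real.rpow_pos_of_pos hx' q
    positivity
  have hlim : Tendsto g atTop (𝓝 (F/((k:ℝ)+2))) := by
    have h0 : Tendsto (fun t:ℝ => t/(B+t)) atTop (𝓝 1) := by
      have h1 : Tendsto (fun t:ℝ => 1 - B/(B+t)) atTop (𝓝 1) := by
        have h2 : Tendsto (fun t:ℝ => B/(B+t)) atTop (𝓝 0) :=
          Filter.Tendsto.div_atTop tendsto_const_nhds
            (tendsto_atTop_add_const_left atTop B tendsto_id)
        simpa using tendsto_const_nhds.sub h2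
      refine h1.congr' ?_
      filter_upwards [eventually_gt_atTop 0] with t ht
      have : B + t ≠ 0 := by positivity
      field_simp
      ring
    have h1 : Tendsto (fun t:ℝ => F/((k:ℝ)+2) * (t/(B+t))^(k+1)) atTop
        (𝓝 (F/((k:ℝ)+2))) := by
      have := (h0.pow (k+1)).const_mul (F/((k:ℝ)+2))
      simpa using this
    have h2 := h1.comp (tendsto_rpow_atTop hq)
    refine h2.congr' ?_
    filter_upwards [eventually_gt_atTop 0] with r hr
    have key : (r^q)^(k+1) = r^(k+2) := by
      rw [← Real.rpow_natCast (r^q) (k+1), ← Real.rpow_mul hr.le]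
      rw [show ((k+1:ℕ):ℝ) = (k:ℝ)+1 by push_cast; ring, hqk,
        show ((k:ℝ)+2) = ((k+2:ℕ):ℝ) by push_cast; ring, Real.rpow_natCast]
    simp only [Function.comp, hg, div_pow, key]
  have := integral_Ioi_of_hasDerivAt_of_nonneg hc hderiv hpos hlim
  rw [this, hg]
  norm_num

/-- The total mass of the standard bubble `e^{U_{ε,p}}` equals `c_N`. -/
theorem bubble_total_mass (N : ℕ) (hN : 2 ≤ N) (ε : ℝ) (hε : 0 < ε)
    (p : EuclideanSpace ℝ (Fin N)) :
    (∫ x : EuclideanSpace ℝ (Fin N),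
        FN N * ε ^ ((N : ℝ) / ((N : ℝ) - 1)) /
          (ε ^ ((N : ℝ) / ((N : ℝ) - 1)) + ‖x - p‖ ^ ((N : ℝ) / ((N : ℝ) - 1))) ^ N) =
      cN N := by
  obtain ⟨k, rfl⟩ : ∃ k, N = k + 2 := ⟨N - 2, by omega⟩
  set q : ℝ := ((k:ℝ)+2)/((k:ℝ)+1) with hqdef
  have hqe : ((k+2:ℕ):ℝ)/(((k+2:ℕ):ℝ)-1) = q := by push_cast; rw [hqdef]; ring
  have hq : 0 < q := by positivity
  have hqk : q * ((k:ℝ)+1) = (k:ℝ)+2 := by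
    rw [hqdef]; field_simp
  have hB : 0 < ε ^ q := Real.rpow_pos_of_pos hε q
  have hF : 0 ≤ FN (k+2) := by
    unfold FN
    have h1 : ((k+2:ℕ):ℝ) - 1 = (k:ℝ)+1 := by push_cast; ring
    rw [h1]
    positivity
  simp only [hqe]
  have htrans : (∫ x : EuclideanSpace ℝ (Fin (k+2)),
      FN (k+2) * ε ^ q / (ε ^ q + ‖x - p‖ ^ q) ^ (k+2)) =
      ∫ x : EuclideanSpace ℝ (Fin (k+2)),
      FN (k+2) * ε ^ q / (ε ^ q + ‖x‖ ^ q) ^ (k+2) :=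
    integral_sub_right_eq_self
      (fun x : EuclideanSpace ℝ (Fin (k+2)) =>
        FN (k+2) * ε ^ q / (ε ^ q + ‖x‖ ^ q) ^ (k+2)) p
  rw [htrans]
  haveI : Nontrivial (EuclideanSpace ℝ (Fin (k+2))) := inferInstance
  rw [integral_fun_norm_addHaar (volume : Measure (EuclideanSpace ℝ (Fin (k+2))))
    (fun r : ℝ => FN (k+2) * ε ^ q / (ε ^ q + r ^ q) ^ (k+2))]
  rw [finrank_euclideanSpace_fin]
  simp only [smul_eq_mul, Nat.add_sub_cancel, show k+2-1 = k+1 from rfl]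
  rw [bubble_radial_integral k q (ε^q) (FN (k+2)) hB hq hF hqk]
  unfold cN omegaN FN
  have h1 : ((k+2:ℕ):ℝ) - 1 = (k:ℝ)+1 := by push_cast; ring
  rw [h1, nsmul_eq_mul]
  push_cast
  field_simp
  ring
  rfl
end
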